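/- For all integers k ≥ 2 and n ≥ 1, the path P_n is a TS_k-reconfiguration graph; i.e., there exists a graph G with TS_k(G) isomorphic to P_n. -/

import Mathlib

open SimpleGraph

/-- `I` is an independent (stable) set of `G`. -/
def IsIndep {V : Type*} (G : SimpleGraph V) (I : Finset V) : Prop :=
  ∀ u ∈ I, ∀ v ∈ I, ¬ G.Adj u v

/-- Vertices of the `TS_k`-reconfiguration graph: size-`k` independent sets of `G`. -/
abbrev TSVert {V : Type*} (G : SimpleGraph V) (k : ℕ) := {I : Finset V // I.card = k ∧ IsIndep G I}

/-- The `TS_k`-reconfiguration graph of `G`: size-`k` independent sets, adjacent iff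
`I \ J = {u}`, `J \ I = {v}` and `uv ∈ E(G)`. -/
def TSk {V : Type*} [DecidableEq V] (G : SimpleGraph V) (k : ℕ) : SimpleGraph (TSVert G k) :=
  SimpleGraph.fromRel (fun I J =>
    ∃ u v, (I : Finset V) \ (J : Finset V) = {u} ∧
      (J : Finset V) \ (I : Finset V) = {v} ∧ G.Adj u v)

namespace Stmt5Aux

open Finset

abbrev Wt (n m : ℕ) : Type := Fin (n+1) ⊕ Fin m

/-- The host graph: complement of a path on `Fin (n+1)`, plus `m` isolated vertices. -/
def myG (n m : ℕ) : SimpleGraph (Wt n m) :=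
  SimpleGraph.fromRel (fun x y => ∃ i j : Fin (n+1), x = Sum.inl i ∧ y = Sum.inl j ∧
    i.val ≠ j.val ∧ i.val + 1 ≠ j.val ∧ j.val + 1 ≠ i.val)

lemma myG_adj_inl {n m : ℕ} {i j : Fin (n+1)} :
    (myG n m).Adj (Sum.inl i) (Sum.inl j) ↔
      i.val ≠ j.val ∧ i.val + 1 ≠ j.val ∧ j.val + 1 ≠ i.val := by
  constructor
  · rintro ⟨hne, h | h⟩ <;> obtain ⟨a, b, ha, hb, h1, h2, h3⟩ := h <;>
      simp only [Sum.inl.injEq] at ha hb <;> subst ha <;> subst hb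
    · exact ⟨h1, h2, h3⟩
    · exact ⟨fun h => h1 h.symm, h3, h2⟩
  · rintro ⟨h1, h2, h3⟩
    exact ⟨by simp [Fin.val_ne_iff.mp h1] , Or.inl ⟨i, j, rfl, rfl, h1, h2, h3⟩⟩

lemma myG_not_adj_inr {n m : ℕ} {x : Wt n m} {b : Fin m} : ¬ (myG n m).Adj x (Sum.inr b) := by
  rintro ⟨hne, h | h⟩ <;> obtain ⟨a, c, ha, hb, -⟩ := h <;> simp_all

lemma myG_not_adj_inr' {n m : ℕ} {x : Wt n m} {b : Fin m} : ¬ (myG n m).Adj (Sum.inr b) x :=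
  fun h => myG_not_adj_inr h.symm

/-- The `i`-th token configuration. -/
def cfg (n m : ℕ) (i : Fin n) : Finset (Wt n m) :=
  {Sum.inl i.castSucc, Sum.inl i.succ} ∪ Finset.univ.image Sum.inr

lemma mem_cfg {n m : ℕ} {i : Fin n} {x : Wt n m} :
    x ∈ cfg n m i ↔ x = Sum.inl i.castSucc ∨ x = Sum.inl i.succ ∨ ∃ b, x = Sum.inr b := by
  simp [cfg, or_assoc, eq_comm (a := x)]

lemma castSucc_ne_succ {n : ℕ} (i : Fin n) : (i.castSucc : Fin (n+1)) ≠ i.succ := by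
  simp [Fin.ext_iff]

lemma cfg_card {n m : ℕ} (i : Fin n) : (cfg n m i).card = m + 2 := by
  rw [cfg, card_union_of_disjoint, card_image_of_injective _ Sum.inr_injective]
  · have : ({Sum.inl i.castSucc, Sum.inl i.succ} : Finset (Wt n m)).card = 2 := by
      rw [card_pair (by simpa using castSucc_ne_succ i)]
    simp [this]; omega
  · simp [Finset.disjoint_left]

lemma cfg_indep {n m : ℕ} (i : Fin n) : IsIndep (myG n m) (cfg n m i) := by
  intro u hu v hv
  rw [mem_cfg] at hu hv
  rcases hu with rfl | rfl | ⟨b, rfl⟩ <;> rcases hv with rfl | rfl | ⟨c, rfl⟩ <;>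
    first
      | exact myG_not_adj_inr
      | exact myG_not_adj_inr'
      | (simp only [myG_adj_inl, Fin.coe_castSucc, Fin.val_succ]; omega)

def fcfg (n m : ℕ) (i : Fin n) : TSVert (myG n m) (m+2) :=
  ⟨cfg n m i, cfg_card i, cfg_indep i⟩

lemma fcfg_inj (n m : ℕ) : Function.Injective (fcfg n m) := by
  intro i j h
  have h' : cfg n m i = cfg n m j := congrArg Subtype.val h
  have h1 : (Sum.inl i.castSucc : Wt n m) ∈ cfg n m j := by
    rw [← h', mem_cfg]; exact Or.inl rfl
  have h2 : (Sum.inl i.succ : Wt n m) ∈ cfg n m j := by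
    rw [← h', mem_cfg]; exact Or.inr (Or.inl rfl)
  rw [mem_cfg] at h1 h2
  have e1 : i.val = j.val ∨ i.val = j.val + 1 := by
    rcases h1 with h | h | ⟨b, h⟩ <;> simp [Fin.ext_iff] at h <;> omega
  have e2 : i.val + 1 = j.val ∨ i.val + 1 = j.val + 1 := by
    rcases h2 with h | h | ⟨b, h⟩ <;> simp [Fin.ext_iff] at h <;> omega
  exact Fin.ext (by omega)

lemma fcfg_surj (n m : ℕ) : Function.Surjective (fcfg n m) := by
  rintro ⟨I, hcard, hind⟩
  classical
  set Sl : Finset (Fin (n+1)) := Finset.univ.filter (fun a => Sum.inl a ∈ I) with hSl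
  set Sr : Finset (Fin m) := Finset.univ.filter (fun b => Sum.inr b ∈ I) with hSr
  have hIsplit : I = Sl.image Sum.inl ∪ Sr.image Sum.inr := by
    ext x
    cases x with
    | inl a => simp [hSl, hSr]
    | inr b => simp [hSl, hSr]
  have hdisj : Disjoint (Sl.image Sum.inl) (Sr.image Sum.inr) := by
    simp [Finset.disjoint_left]
  have hcards : Sl.card + Sr.card = m + 2 := by
    rw [← hcard, hIsplit, card_union_of_disjoint hdisj,
      card_image_of_injective _ Sum.inl_injective, card_image_of_injective _ Sum.inr_injective]
  have hSrle : Sr.card ≤ m := by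
    simpa using card_filter_le (Finset.univ : Finset (Fin m)) _
  -- every two elements of Sl are within distance 1
  have hclose : ∀ a ∈ Sl, ∀ b ∈ Sl, a.val = b.val ∨ a.val + 1 = b.val ∨ b.val + 1 = a.val := by
    intro a ha b hb
    have := hind _ (by simp [hSl] at ha; exact ha) _ (by simp [hSl] at hb; exact hb)
    rw [myG_adj_inl] at this
    push_neg at this
    by_contra hcon
    push_neg at hcon
    exact absurd (this hcon.1) (by tauto)
  have hSlle : Sl.card ≤ 2 := by
    by_contra hgt
    push_neg at hgt
    obtain ⟨a, ha, b, hb, c, hc, hab, hac, hbc⟩ := (Finset.two_lt_card (s := Sl)).mp (by omega)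
    have h1 := hclose a ha b hb
    have h2 := hclose a ha c hc
    have h3 := hclose b hb c hc
    simp only [ne_eq, Fin.ext_iff] at hab hac hbc
    omega
  have hSl2 : Sl.card = 2 := by omega
  obtain ⟨a, b, hab, hSlab⟩ := Finset.card_eq_two.mp hSl2
  have haS : a ∈ Sl := by rw [hSlab]; simp
  have hbS : b ∈ Sl := by rw [hSlab]; simp
  have hSr2 : Sr = Finset.univ := Finset.eq_univ_of_card _ (by simp; omega)
  -- wlog a.val + 1 = b.val
  have hkey : a.val + 1 = b.val ∨ b.val + 1 = a.val := by
    have := hclose a haS b hbS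
    have : ¬ a.val = b.val := fun h => hab (Fin.ext h)
    tauto
  obtain ⟨a, b, hab2, hSlab⟩ : ∃ a b : Fin (n+1), a.val + 1 = b.val ∧ Sl = {a, b} := by
    rcases hkey with h | h
    · exact ⟨a, b, h, hSlab⟩
    · exact ⟨b, a, h, by rw [hSlab, Finset.pair_comm]⟩
  have hbval : b.val ≤ n := by omega
  refine ⟨⟨a.val, by omega⟩, ?_⟩
  apply Subtype.ext
  show cfg n m _ = I
  rw [hIsplit, hSlab, hSr2, cfg]
  congr 1
  · have h1 : (Fin.castSucc ⟨a.val, by omega⟩ : Fin (n+1)) = a := by simp [Fin.ext_iff]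
    have h2 : (Fin.succ ⟨a.val, by omega⟩ : Fin (n+1)) = b := by simp [Fin.ext_iff]; omega
    rw [h1, h2]
    simp [Finset.image_insert]
  
lemma cfg_sdiff {n m : ℕ} {i j : Fin n} (h : i.val + 1 = j.val) :
    cfg n m i \ cfg n m j = {Sum.inl i.castSucc} := by
  ext x
  simp only [Finset.mem_sdiff, mem_cfg, Finset.mem_singleton]
  constructor
  · rintro ⟨h1 | h1 | ⟨b, rfl⟩, h2⟩
    · exact h1
    · exact absurd (Or.inl (by rw [h1]; simp only [Sum.inl.injEq, Fin.ext_iff,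
        Fin.val_succ, Fin.coe_castSucc]; omega)) h2
    · exact absurd (Or.inr (Or.inr ⟨b, rfl⟩)) h2
  · rintro rfl
    refine ⟨Or.inl rfl, ?_⟩
    rintro (hc | hc | ⟨b, hb⟩) <;>
      first
        | (simp only [Sum.inl.injEq, Fin.ext_iff, Fin.val_succ, Fin.coe_castSucc] at hc; omega)
        | simp at hb

lemma cfg_sdiff' {n m : ℕ} {i j : Fin n} (h : i.val + 1 = j.val) :
    cfg n m j \ cfg n m i = {Sum.inl j.succ} := by
  ext x
  simp only [Finset.mem_sdiff, mem_cfg, Finset.mem_singleton]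
  constructor
  · rintro ⟨h1 | h1 | ⟨b, rfl⟩, h2⟩
    · exact absurd (Or.inr (Or.inl (by rw [h1]; simp only [Sum.inl.injEq, Fin.ext_iff,
        Fin.val_succ, Fin.coe_castSucc]; omega))) h2
    · exact h1
    · exact absurd (Or.inr (Or.inr ⟨b, rfl⟩)) h2
  · rintro rfl
    refine ⟨Or.inr (Or.inl rfl), ?_⟩
    rintro (hc | hc | ⟨b, hb⟩) <;>
      first
        | (simp only [Sum.inl.injEq, Fin.ext_iff, Fin.val_succ, Fin.coe_castSucc] at hc; omega)
        | simp at hb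

lemma adj_of_move {n m : ℕ} {i j : Fin n}
    (hQ : ∃ u v, cfg n m i \ cfg n m j = {u} ∧ cfg n m j \ cfg n m i = {v} ∧
      (myG n m).Adj u v) :
    i.val + 1 = j.val ∨ j.val + 1 = i.val := by
  obtain ⟨u, v, hu, hv, -⟩ := hQ
  have hui : u ∈ cfg n m i ∧ u ∉ cfg n m j := by
    have : u ∈ cfg n m i \ cfg n m j := by rw [hu]; simp
    simpa [Finset.mem_sdiff] using this
  have hne : i ≠ j := by rintro rfl; exact hui.2 hui.1
  have hnev : i.val ≠ j.val := fun hv => hne (Fin.ext hv)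
  rcases mem_cfg.mp hui.1 with h1 | h1 | ⟨b, rfl⟩
  · -- u = castSucc i, then succ i ∈ cfg j
    have hs : (Sum.inl i.succ : Wt n m) ∈ cfg n m j := by
      by_contra hns
      have hmem : (Sum.inl i.succ : Wt n m) ∈ cfg n m i \ cfg n m j :=
        Finset.mem_sdiff.mpr ⟨mem_cfg.mpr (Or.inr (Or.inl rfl)), hns⟩
      rw [hu, Finset.mem_singleton, h1] at hmem
      exact (castSucc_ne_succ i) (by simpa using hmem.symm)
    rcases mem_cfg.mp hs with h2 | h2 | ⟨b, h2⟩ <;>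
      first
        | (simp only [Sum.inl.injEq, Fin.ext_iff, Fin.val_succ, Fin.coe_castSucc] at h2; omega)
        | simp at h2
  · -- u = succ i, then castSucc i ∈ cfg j
    have hs : (Sum.inl i.castSucc : Wt n m) ∈ cfg n m j := by
      by_contra hns
      have hmem : (Sum.inl i.castSucc : Wt n m) ∈ cfg n m i \ cfg n m j :=
        Finset.mem_sdiff.mpr ⟨mem_cfg.mpr (Or.inl rfl), hns⟩
      rw [hu, Finset.mem_singleton, h1] at hmem
      exact (castSucc_ne_succ i) (by simpa using hmem)
    rcases mem_cfg.mp hs with h2 | h2 | ⟨b, h2⟩ <;>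
      first
        | (simp only [Sum.inl.injEq, Fin.ext_iff, Fin.val_succ, Fin.coe_castSucc] at h2; omega)
        | simp at h2
  · exact absurd (mem_cfg.mpr (Or.inr (Or.inr ⟨b, rfl⟩))) hui.2

lemma tsk_adj_iff {n m : ℕ} (i j : Fin n) :
    (TSk (myG n m) (m+2)).Adj (fcfg n m i) (fcfg n m j) ↔
      i.val + 1 = j.val ∨ j.val + 1 = i.val := by
  rw [TSk, SimpleGraph.fromRel_adj]
  constructor
  · rintro ⟨hne, hQ | hQ⟩
    · exact adj_of_move hQ
    · exact (adj_of_move hQ).symm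
  · intro h
    have hne : fcfg n m i ≠ fcfg n m j := by
      intro he
      have := fcfg_inj n m he
      subst this
      omega
    refine ⟨hne, ?_⟩
    rcases h with h | h
    · refine Or.inl ⟨_, _, cfg_sdiff h, cfg_sdiff' h, ?_⟩
      rw [myG_adj_inl]
      simp only [Fin.val_succ, Fin.coe_castSucc]
      omega
    · refine Or.inr ⟨_, _, cfg_sdiff h, cfg_sdiff' h, ?_⟩
      rw [myG_adj_inl]
      simp only [Fin.val_succ, Fin.coe_castSucc]
      omega

end Stmt5Aux

/-- For all `k ≥ 2` and `n ≥ 1`, the path `P_n` is a `TS_k`-reconfiguration graph. -/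
theorem stmt5 (k n : ℕ) (hk : 2 ≤ k) (hn : 1 ≤ n) :
    ∃ (W : Type) (_ : Fintype W) (dW : DecidableEq W) (G : SimpleGraph W),
      Nonempty ((@TSk W dW G k) ≃g SimpleGraph.pathGraph n) := by
  obtain ⟨m, rfl⟩ : ∃ m, k = m + 2 := ⟨k - 2, by omega⟩
  refine ⟨Stmt5Aux.Wt n m, inferInstance, inferInstance, Stmt5Aux.myG n m, ⟨?_⟩⟩
  refine SimpleGraph.Iso.symm ?_
  exact
    { toEquiv := Equiv.ofBijective (Stmt5Aux.fcfg n m)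
        ⟨Stmt5Aux.fcfg_inj n m, Stmt5Aux.fcfg_surj n m⟩
      map_rel_iff' := by
        intro a b
        rw [pathGraph_adj]
        exact Stmt5Aux.tsk_adj_iff a b }
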